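/- Approximate (noisy) greedy guarantee: let V be a finite set, let f be a non-negative, monotone, submodular set function on subsets of V with f(∅) = 0, let B ≥ 1 be a natural number, and let ε ≥ 0. Let s_1, …, s_B be a sequence of elements of V such that for each i = 1, …, B, writing S_{i−1} = {s_1, …, s_{i−1}}, the marginal gain satisfies f(S_{i−1} ∪ {s_i}) − f(S_{i−1}) ≥ max_{w ∈ V} ( f(S_{i−1} ∪ {w}) − f(S_{i−1}) ) − 2ε. Then f({s_1, …, s_B}) ≥ (1 − 1/e) · max{ f(S) : S ⊆ V, |S| ≤ B } − 2 · ε · B. -/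

import Mathlib

open Finset

lemma marg_sum {V : Type*} [DecidableEq V]
    (f : Finset V → ℝ)
    (hmono : ∀ S S' : Finset V, S ⊆ S' → f S ≤ f S')
    (hsub : ∀ S S' : Finset V, S ⊆ S' → ∀ v ∉ S',
      f (insert v S') - f S' ≤ f (insert v S) - f S)
    (T S : Finset V) :
    f (S ∪ T) - f S ≤ ∑ t ∈ T, (f (insert t S) - f S) := by
  classical
  induction T using Finset.induction with
  | empty => simp
  | @insert a T ha ih =>
    rw [Finset.sum_insert ha]
    have h1 : f (S ∪ insert a T) - f (S ∪ T) ≤ f (insert a S) - f S := by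
      by_cases haS : a ∈ S ∪ T
      · have : S ∪ insert a T = S ∪ T := by
          rw [Finset.union_insert, Finset.insert_eq_self.mpr haS]
        rw [this]
        have := hmono S (insert a S) (Finset.subset_insert a S)
        linarith
      · have : S ∪ insert a T = insert a (S ∪ T) := by
          rw [Finset.union_insert]
        rw [this]
        exact hsub S (S ∪ T) Finset.subset_union_left a haS
    linarith

/-- Approximate (noisy) greedy guarantee: let `f` be a non-negative, monotone,
submodular set function on subsets of a finite set `V` with `f(∅) = 0`, let `B ≥ 1` and
`ε ≥ 0`. If `s_1, …, s_B` (here `s 0, …, s (B-1)`) is a sequence of elements of `V`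
such that at each step the selected element's marginal gain is within `2ε` of the best
marginal gain, then `f({s_1, …, s_B}) ≥ (1 − 1/e) · max{ f(S) : |S| ≤ B } − 2 · ε · B`. -/
theorem noisy_greedy_guarantee {V : Type*} [Fintype V] [DecidableEq V] [Nonempty V]
    (f : Finset V → ℝ) (hnn : ∀ S : Finset V, 0 ≤ f S) (hempty : f ∅ = 0)
    (hmono : ∀ S S' : Finset V, S ⊆ S' → f S ≤ f S')
    (hsub : ∀ S S' : Finset V, S ⊆ S' → ∀ v ∉ S',
      f (insert v S') - f S' ≤ f (insert v S) - f S)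
    (B : ℕ) (hB : 1 ≤ B) (ε : ℝ) (hε : 0 ≤ ε) (s : ℕ → V)
    (hgreedy : ∀ i < B,
      (Finset.univ.sup' Finset.univ_nonempty
          (fun w : V =>
            f (insert w ((Finset.range i).image s)) - f ((Finset.range i).image s)))
        - 2 * ε ≤
      f (insert (s i) ((Finset.range i).image s)) - f ((Finset.range i).image s)) :
    (1 - 1 / Real.exp 1) *
        ((Finset.univ.filter (fun S : Finset V => S.card ≤ B)).sup' ⟨∅, by simp⟩ f)
      - 2 * ε * B ≤ f ((Finset.range B).image s) := by
  set OPT := (Finset.univ.filter (fun S : Finset V => S.card ≤ B)).sup' ⟨∅, by simp⟩ f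
    with hOPTdef
  have hBpos : (0:ℝ) < B := by exact_mod_cast hB
  set c : ℝ := 1 - 1 / (B:ℝ) with hc
  have hc0 : 0 ≤ c := by
    have : 1 / (B:ℝ) ≤ 1 := by
      rw [div_le_one hBpos]; exact_mod_cast hB
    simp only [hc]; linarith
  have hc1 : c ≤ 1 := by
    have : 0 ≤ 1 / (B:ℝ) := by positivity
    simp only [hc]; linarith
  -- OPT ≥ 0
  have hOPT0 : 0 ≤ OPT := by
    have h := Finset.le_sup' f (b := (∅ : Finset V))
      (s := Finset.univ.filter (fun S : Finset V => S.card ≤ B)) (by simp)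
    rw [hempty] at h
    exact h
  -- an optimal set
  obtain ⟨T, hTmem, hTeq⟩ := Finset.exists_mem_eq_sup'
    (⟨∅, by simp⟩ : (Finset.univ.filter (fun S : Finset V => S.card ≤ B)).Nonempty) f
  have hTcard : T.card ≤ B := by
    simpa using hTmem
  -- gains are nonneg
  have hgain_nonneg : ∀ (w : V) (S : Finset V), 0 ≤ f (insert w S) - f S := by
    intro w S
    have := hmono S (insert w S) (Finset.subset_insert w S)
    linarith
  -- key bound: OPT - f S ≤ B * G S
  have hkey : ∀ S : Finset V,
      OPT - f S ≤ (B:ℝ) * (Finset.univ.sup' Finset.univ_nonempty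
        (fun w : V => f (insert w S) - f S)) := by
    intro S
    set G := Finset.univ.sup' Finset.univ_nonempty (fun w : V => f (insert w S) - f S)
      with hGdef
    have hG0 : 0 ≤ G := by
      have := Finset.le_sup' (fun w : V => f (insert w S) - f S)
        (Finset.mem_univ (Classical.arbitrary V))
      exact le_trans (hgain_nonneg _ S) this
    have h1 : OPT ≤ f (S ∪ T) := by
      rw [hOPTdef, hTeq]
      exact hmono T (S ∪ T) Finset.subset_union_right
    have h2 : f (S ∪ T) - f S ≤ ∑ t ∈ T, (f (insert t S) - f S) :=
      marg_sum f hmono hsub T S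
    have h3 : ∑ t ∈ T, (f (insert t S) - f S) ≤ (T.card : ℝ) * G := by
      rw [← nsmul_eq_mul]
      apply Finset.sum_le_card_nsmul
      intro t _
      exact Finset.le_sup' (fun w : V => f (insert w S) - f S) (Finset.mem_univ t)
    have h4 : (T.card : ℝ) * G ≤ (B:ℝ) * G := by
      apply mul_le_mul_of_nonneg_right _ hG0
      exact_mod_cast hTcard
    linarith
  -- main induction
  have main : ∀ i, i ≤ B →
      OPT - f ((Finset.range i).image s) ≤ c ^ i * OPT + 2 * ε * i := by
    intro i
    induction i with
    | zero => intro _; simp [hempty]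
    | succ n ih =>
      intro hn
      have hn' : n < B := hn
      have ihn := ih (le_of_lt hn')
      have hgr := hgreedy n hn'
      have hmarg := hkey ((Finset.range n).image s)
      have himg : ((Finset.range (n+1)).image s)
          = insert (s n) ((Finset.range n).image s) := by
        rw [Finset.range_add_one, Finset.image_insert]
      rw [himg]
      set Sn := (Finset.range n).image s
      set G := Finset.univ.sup' Finset.univ_nonempty
        (fun w : V => f (insert w Sn) - f Sn) with hGdef
      -- δ(n+1) ≤ c δn + 2ε
      have step : OPT - f (insert (s n) Sn) ≤ c * (OPT - f Sn) + 2 * ε := by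
        have h1 : G - 2 * ε ≤ f (insert (s n) Sn) - f Sn := hgr
        have h2 : (OPT - f Sn) / (B:ℝ) ≤ G := by
          rw [div_le_iff₀ hBpos] at *
          nlinarith [hmarg]
        have : c * (OPT - f Sn) = (OPT - f Sn) - (OPT - f Sn) / (B:ℝ) := by
          rw [hc]; ring
        rw [this]
        linarith
      have hcn : (0:ℝ) ≤ c ^ n := pow_nonneg hc0 n
      have hεn : (0:ℝ) ≤ 2 * ε * n := by positivity
      calc OPT - f (insert (s n) Sn) ≤ c * (OPT - f Sn) + 2 * ε := step
        _ ≤ c * (c ^ n * OPT + 2 * ε * n) + 2 * ε := by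
            refine add_le_add ?_ le_rfl
            exact mul_le_mul_of_nonneg_left ihn hc0
        _ ≤ c ^ (n+1) * OPT + 2 * ε * ((n:ℕ)+1 : ℕ) := by
            push_cast
            have h5 : c * (2 * ε * (n:ℝ)) ≤ 2 * ε * (n:ℝ) := by nlinarith
            calc c * (c ^ n * OPT + 2 * ε * (n:ℝ)) + 2 * ε
                = c ^ (n+1) * OPT + c * (2 * ε * (n:ℝ)) + 2 * ε := by ring
              _ ≤ c ^ (n+1) * OPT + 2 * ε * (n:ℝ) + 2 * ε := by linarith
              _ = c ^ (n+1) * OPT + 2 * ε * ((n:ℝ) + 1) := by ring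
  have hfinal := main B le_rfl
  -- c^B ≤ 1/e
  have hcB : c ^ B ≤ 1 / Real.exp 1 := by
    have h1 : c ≤ Real.exp (-(1 / (B:ℝ))) := by
      have := Real.add_one_le_exp (-(1 / (B:ℝ)))
      simp only [hc]; linarith
    have h2 : c ^ B ≤ (Real.exp (-(1 / (B:ℝ)))) ^ B :=
      pow_le_pow_left₀ hc0 h1 B
    have h3 : (Real.exp (-(1 / (B:ℝ)))) ^ B = Real.exp (-1) := by
      rw [← Real.exp_nat_mul]
      congr 1
      field_simp
    rw [h3] at h2
    rw [Real.exp_neg] at h2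
    rw [one_div]
    exact h2
  have hcBopt : c ^ B * OPT ≤ (1 / Real.exp 1) * OPT :=
    mul_le_mul_of_nonneg_right hcB hOPT0
  linarith
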